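/- arXiv:1901.03254 — 2 statements merged into one kernel-verified Lean document; each statement's English description precedes it below -/
import Mathlib

section
/- With the setup of weighted row sampling: if X is a random variable equal to (u(i)/P_i)·A(i,·) with probability P_i, where P_i = Σ_{ℓ=1}^τ ‖A_ℓ(i,·)‖² / Σ_{ℓ'} ‖A_{ℓ'}‖_F², A = Σ_ℓ A_ℓ, and u ∈ ℂⁿ is a unit vector, then E[X] = u†A, and E‖X − u†A‖² ≤ (τ/1)·Σ_ℓ ‖A_ℓ‖_F² (i.e., the second moment of each sample is bounded by τ Σ_ℓ ‖A_ℓ‖_F²). -/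
set_option maxHeartbeats 1000000
open Matrix MeasureTheory
open scoped BigOperators

noncomputable def frobNorm {m n : Type*} [Fintype m] [Fintype n] (M : Matrix m n ℂ) : ℝ :=
  Real.sqrt (∑ i, ∑ j, ‖M i j‖ ^ 2)

noncomputable def specNorm {m n : Type*} [Fintype m] [Fintype n] [DecidableEq n]
    (M : Matrix m n ℂ) : ℝ :=
  ‖LinearMap.toContinuousLinearMap (Matrix.toEuclideanLin M)‖

noncomputable def vnorm {n : Type*} [Fintype n] (v : n → ℂ) : ℝ :=
  Real.sqrt (∑ i, ‖v i‖ ^ 2)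

lemma integral_sum_smul_dirac {n : ℕ} (P : Fin n → ℝ) (hP : ∀ i, 0 ≤ P i)
    {E : Type*} [NormedAddCommGroup E] [NormedSpace ℝ E] [CompleteSpace E] (f : Fin n → E) :
    ∫ i, f i ∂(Measure.sum fun i : Fin n => ENNReal.ofReal (P i) • Measure.dirac i)
      = ∑ i, P i • f i := by
  set μ : Measure (Fin n) := Measure.sum fun i : Fin n => ENNReal.ofReal (P i) • Measure.dirac i
  have hs : ∀ x : Fin n, μ {x} = ENNReal.ofReal (P x) := by
    intro x
    rw [Measure.sum_apply _ (measurableSet_singleton x), tsum_fintype]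
    simp [Measure.smul_apply, Measure.dirac_apply' _ (measurableSet_singleton x),
      Set.indicator_apply, Finset.sum_ite_eq']
  have hfin : IsFiniteMeasure μ := by
    constructor
    rw [Measure.sum_apply _ MeasurableSet.univ, tsum_fintype]
    exact ENNReal.sum_lt_top.2 fun i _ => by simp [ENNReal.ofReal_lt_top]
  rw [integral_fintype (Integrable.of_finite)]
  simp [Measure.real, hs, ENNReal.toReal_ofReal (hP _)]

/-- Weighted sampling of a row estimator: `E[X] = u†A` and second moment bound `τ Σ‖A_ℓ‖_F²`. -/
theorem stmt3 {n τ : ℕ} (A : Fin τ → Matrix (Fin n) (Fin n) ℂ)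
    (u : Fin n → ℂ) (hu : vnorm u = 1)
    (P : Fin n → ℝ)
    (hP : ∀ i, P i = (∑ ℓ, vnorm (A ℓ i) ^ 2) / ∑ ℓ, frobNorm (A ℓ) ^ 2)
    (hPpos : ∀ i, (∑ ℓ, A ℓ) i ≠ 0 → 0 < P i)
    (X : Fin n → Fin n → ℂ)
    (hX : ∀ i j, X i j = (starRingEnd ℂ (u i) / (P i : ℂ)) * (∑ ℓ, A ℓ) i j)
    (ν : Measure (Fin n))
    (hν : ν = Measure.sum fun i : Fin n => ENNReal.ofReal (P i) • Measure.dirac i) :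
    (∀ j, ∫ i, X i j ∂ν = (star u ᵥ* (∑ ℓ, A ℓ)) j) ∧
      (∫ i, (∑ j, ‖X i j - (star u ᵥ* (∑ ℓ, A ℓ)) j‖ ^ 2) ∂ν) ≤
        (τ : ℝ) * ∑ ℓ, frobNorm (A ℓ) ^ 2 := by
  have hSnn : (0:ℝ) ≤ ∑ ℓ, frobNorm (A ℓ) ^ 2 := Finset.sum_nonneg fun ℓ _ => sq_nonneg _
  set S : ℝ := ∑ ℓ, frobNorm (A ℓ) ^ 2 with hSdef
  have hPnn : ∀ i, 0 ≤ P i := fun i => by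
    rw [hP i]; exact div_nonneg (Finset.sum_nonneg fun ℓ _ => sq_nonneg _) hSnn
  have hfrob : ∀ ℓ, frobNorm (A ℓ) ^ 2 = ∑ i, ∑ j, ‖A ℓ i j‖ ^ 2 := fun ℓ =>
    Real.sq_sqrt (by positivity)
  have hvn : ∀ (v : Fin n → ℂ), vnorm v ^ 2 = ∑ i, ‖v i‖ ^ 2 := fun v =>
    Real.sq_sqrt (by positivity)
  have hBapp : ∀ i j, (∑ ℓ, A ℓ) i j = ∑ ℓ, A ℓ i j := by
    intro i j; simp [Matrix.sum_apply]
  have hm : ∀ j, (star u ᵥ* (∑ ℓ, A ℓ)) j = ∑ i, starRingEnd ℂ (u i) * (∑ ℓ, A ℓ) i j := by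
    intro j
    simp [Matrix.vecMul, dotProduct, Complex.star_def]
  have hzero : ∀ i, P i = 0 → ∀ j, (∑ ℓ, A ℓ) i j = 0 := by
    intro i hPi j
    by_cases h : (∑ ℓ, A ℓ) i = 0
    · exact congrFun h j
    · exact absurd (hPpos i h) (by simp [hPi])
  have hXsum : ∀ j, ∑ i, P i • X i j = (star u ᵥ* (∑ ℓ, A ℓ)) j := by
    intro j
    rw [hm]
    refine Finset.sum_congr rfl fun i _ => ?_
    by_cases hPi : P i = 0
    · simp [hX, hPi, hzero i hPi j]
    · have hPc : (P i : ℂ) ≠ 0 := Complex.ofReal_ne_zero.2 hPi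
      rw [hX, Complex.real_smul]
      field_simp
  constructor
  · intro j
    rw [hν, integral_sum_smul_dirac P hPnn]
    exact hXsum j
  rw [hν, integral_sum_smul_dirac P hPnn]
  simp only [smul_eq_mul]
  by_cases hS0 : S = 0
  · have hP0 : ∀ i, P i = 0 := fun i => by rw [hP i, hS0, div_zero]
    simp [hP0, hS0]
  · have hSpos : 0 < S := lt_of_le_of_ne hSnn (Ne.symm hS0)
    have hnum : ∀ i, ∑ ℓ, vnorm (A ℓ i) ^ 2 = P i * S := fun i => by
      rw [hP i]; field_simp
    have hsum1 : ∑ i, P i = 1 := by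
      have hkey : ∑ i, ∑ ℓ, vnorm (A ℓ i) ^ 2 = S := by
        rw [Finset.sum_comm, hSdef]
        refine Finset.sum_congr rfl fun ℓ _ => ?_
        rw [hfrob ℓ]
        exact Finset.sum_congr rfl fun i _ => hvn _
      calc ∑ i, P i = ∑ i, (∑ ℓ, vnorm (A ℓ i) ^ 2) / S := by
            exact Finset.sum_congr rfl fun i _ => hP i
        _ = (∑ i, ∑ ℓ, vnorm (A ℓ i) ^ 2) / S := by rw [Finset.sum_div]
        _ = 1 := by rw [hkey, div_self hS0]
    have hu2 : ∑ i, ‖u i‖ ^ 2 = 1 := by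
      rw [← hvn u, hu, one_pow]
    have hvar : ∀ j, ∑ i, P i * ‖X i j - (star u ᵥ* (∑ ℓ, A ℓ)) j‖ ^ 2
        ≤ ∑ i, P i * ‖X i j‖ ^ 2 := by
      intro j
      set m : ℂ := (star u ᵥ* (∑ ℓ, A ℓ)) j with hmdef
      have hmean : ∑ i, P i • X i j = m := hXsum j
      have expand : ∀ z : ℂ, ‖z - m‖ ^ 2
          = ‖z‖ ^ 2 + ‖m‖ ^ 2 - 2 * (z * (starRingEnd ℂ) m).re := by
        intro z
        rw [Complex.sq_norm, Complex.sq_norm, Complex.sq_norm, Complex.normSq_sub]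
      have hmc : (m * (starRingEnd ℂ) m).re = ‖m‖ ^ 2 := by
        rw [Complex.mul_conj, Complex.sq_norm, Complex.ofReal_re]
      calc ∑ i, P i * ‖X i j - m‖ ^ 2
          = ∑ i, (P i * ‖X i j‖ ^ 2 + P i * ‖m‖ ^ 2
              - 2 * (P i • (X i j * (starRingEnd ℂ) m)).re) := by
            refine Finset.sum_congr rfl fun i _ => ?_
            rw [expand, Complex.smul_re, smul_eq_mul]
            ring
        _ = ∑ i, P i * ‖X i j‖ ^ 2 + (∑ i, P i) * ‖m‖ ^ 2
              - 2 * ((∑ i, P i • X i j) * (starRingEnd ℂ) m).re := by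
            have haux : ∑ i, P i • (X i j * (starRingEnd ℂ) m)
                = (∑ i, P i • X i j) * (starRingEnd ℂ) m := by
              rw [Finset.sum_mul]
              exact Finset.sum_congr rfl fun i _ => (smul_mul_assoc _ _ _).symm
            rw [Finset.sum_sub_distrib, Finset.sum_add_distrib, ← Finset.sum_mul,
              ← Finset.mul_sum, ← Complex.re_sum, haux]
        _ = ∑ i, P i * ‖X i j‖ ^ 2 + ‖m‖ ^ 2 - 2 * ‖m‖ ^ 2 := by
            rw [hsum1, hmean, one_mul, hmc]
        _ ≤ ∑ i, P i * ‖X i j‖ ^ 2 := by nlinarith [sq_nonneg ‖m‖]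
    have hrowbound : ∀ i, P i * ∑ j, ‖X i j‖ ^ 2 ≤ ‖u i‖ ^ 2 * (τ * S) := by
      intro i
      by_cases hPi : P i = 0
      · rw [hPi, zero_mul]
        exact mul_nonneg (sq_nonneg _) (mul_nonneg (Nat.cast_nonneg τ) hSnn)
      · have hPipos : 0 < P i := lt_of_le_of_ne (hPnn i) (Ne.symm hPi)
        have hXsq : ∀ j, ‖X i j‖ ^ 2 = ‖u i‖ ^ 2 / (P i) ^ 2 * ‖(∑ ℓ, A ℓ) i j‖ ^ 2 := by
          intro j
          have h1 : ‖(starRingEnd ℂ) (u i)‖ = ‖u i‖ := RCLike.norm_conj _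
          have h2 : ‖((P i : ℝ) : ℂ)‖ = P i := by
            rw [Complex.norm_real]; exact abs_of_pos hPipos
          rw [hX i j, norm_mul, norm_div, h1, h2, mul_pow, div_pow]
        have hCS : ∀ j, ‖(∑ ℓ, A ℓ) i j‖ ^ 2 ≤ (τ : ℝ) * ∑ ℓ, ‖A ℓ i j‖ ^ 2 := by
          intro j
          rw [hBapp]
          calc ‖∑ ℓ, A ℓ i j‖ ^ 2 ≤ (∑ ℓ, ‖A ℓ i j‖) ^ 2 := by
                exact pow_le_pow_left₀ (norm_nonneg _) (norm_sum_le _ _) 2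
            _ ≤ ((Finset.univ : Finset (Fin τ)).card : ℝ) * ∑ ℓ, ‖A ℓ i j‖ ^ 2 :=
                sq_sum_le_card_mul_sum_sq
            _ = (τ : ℝ) * ∑ ℓ, ‖A ℓ i j‖ ^ 2 := by simp
        have hrow : ∑ j, ‖(∑ ℓ, A ℓ) i j‖ ^ 2 ≤ (τ : ℝ) * ∑ ℓ, vnorm (A ℓ i) ^ 2 := by
          calc ∑ j, ‖(∑ ℓ, A ℓ) i j‖ ^ 2 ≤ ∑ j, (τ : ℝ) * ∑ ℓ, ‖A ℓ i j‖ ^ 2 :=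
              Finset.sum_le_sum fun j _ => hCS j
            _ = (τ : ℝ) * ∑ ℓ, ∑ j, ‖A ℓ i j‖ ^ 2 := by
              rw [← Finset.mul_sum, Finset.sum_comm]
            _ = (τ : ℝ) * ∑ ℓ, vnorm (A ℓ i) ^ 2 := by
              congr 1
              exact Finset.sum_congr rfl fun ℓ _ => (hvn _).symm
        calc P i * ∑ j, ‖X i j‖ ^ 2
            = ‖u i‖ ^ 2 / P i * ∑ j, ‖(∑ ℓ, A ℓ) i j‖ ^ 2 := by
              simp_rw [hXsq]
              rw [← Finset.mul_sum, ← mul_assoc]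
              congr 1
              field_simp
          _ ≤ ‖u i‖ ^ 2 / P i * ((τ : ℝ) * ∑ ℓ, vnorm (A ℓ i) ^ 2) :=
              mul_le_mul_of_nonneg_left hrow (div_nonneg (sq_nonneg _) hPipos.le)
          _ = ‖u i‖ ^ 2 * (τ * S) := by
              rw [hnum i]
              field_simp
    calc ∑ i, P i * ∑ j, ‖X i j - (star u ᵥ* (∑ ℓ, A ℓ)) j‖ ^ 2
        = ∑ j, ∑ i, P i * ‖X i j - (star u ᵥ* (∑ ℓ, A ℓ)) j‖ ^ 2 := by
          simp_rw [Finset.mul_sum]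
          rw [Finset.sum_comm]
      _ ≤ ∑ j, ∑ i, P i * ‖X i j‖ ^ 2 := Finset.sum_le_sum fun j _ => hvar j
      _ = ∑ i, P i * ∑ j, ‖X i j‖ ^ 2 := by
          simp_rw [Finset.mul_sum]
          rw [Finset.sum_comm]
      _ ≤ ∑ i, ‖u i‖ ^ 2 * (τ * S) := Finset.sum_le_sum fun i _ => hrowbound i
      _ = (τ : ℝ) * S := by
          rw [← Finset.sum_mul, hu2, one_mul]
end

section
/- Let A ∈ ℂ^{k×n} and S ∈ ℂ^{p×n} satisfy ‖A†A − S†S‖_F ≤ ε, and let z_1,…,z_h be unit vectors in ℂⁿ with h ≤ k. Then |Δ(A; z_1,…,z_h) − Δ(S; z_1,…,z_h)| ≤ h² ε, where Δ(M; z_i) := ‖M‖_F² − ‖M − M Σ_i z_i z_i†‖_F². -/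
open Matrix MeasureTheory
open scoped BigOperators

lemma frob_sq {m n : Type*} [Fintype m] [Fintype n] (M : Matrix m n ℂ) :
    (frobNorm M) ^ 2 = (Matrix.trace (Mᴴ * M)).re := by
  have h0 : 0 ≤ ∑ i, ∑ j, ‖M i j‖^2 := by positivity
  rw [frobNorm, Real.sq_sqrt h0, Matrix.trace]
  rw [Finset.sum_comm]
  simp only [Matrix.diag_apply, Matrix.mul_apply, Matrix.conjTranspose_apply, Complex.re_sum,
    Complex.star_def, Complex.mul_conj', Complex.ofReal_re]
  congr 1; ext j; congr 1; ext r
  rw [Complex.sq_norm, Complex.normSq_apply, Complex.mul_re]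
  simp [Complex.conj_re, Complex.conj_im]

lemma delta_eq {m n : Type*} [Fintype m] [Fintype n] (M : Matrix m n ℂ) (P : Matrix n n ℂ) :
    frobNorm M ^ 2 - frobNorm (M - M * P) ^ 2 =
      (Matrix.trace ((Mᴴ * M) * P) + Matrix.trace (Pᴴ * (Mᴴ * M))
        - Matrix.trace (Pᴴ * ((Mᴴ * M) * P))).re := by
  rw [frob_sq, frob_sq]
  have h : (M - M * P)ᴴ * (M - M * P) =
      Mᴴ * M - (Mᴴ * M) * P - Pᴴ * (Mᴴ * M) + Pᴴ * ((Mᴴ * M) * P) := by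
    simp only [Matrix.conjTranspose_sub, Matrix.conjTranspose_mul, Matrix.sub_mul,
      Matrix.mul_sub, Matrix.mul_assoc]
    abel
  rw [h]
  simp only [Matrix.trace_sub, Matrix.trace_add, Complex.sub_re, Complex.add_re]
  ring

lemma dot_le {n : Type*} [Fintype n] (u v : n → ℂ) : ‖star u ⬝ᵥ v‖ ≤ vnorm u * vnorm v := by
  have := norm_inner_le_norm (𝕜 := ℂ) ((WithLp.equiv 2 (n → ℂ)).symm u)
    ((WithLp.equiv 2 (n → ℂ)).symm v)
  simpa [dotProduct, vnorm, EuclideanSpace.norm_eq, PiLp.inner_apply, RCLike.inner_apply, mul_comm]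
    using this

lemma trace_mul_vecMulVec {n : Type*} [Fintype n] (D : Matrix n n ℂ) (v w : n → ℂ) :
    Matrix.trace (D * vecMulVec v w) = w ⬝ᵥ (D *ᵥ v) := by
  simp only [Matrix.trace, Matrix.diag_apply, Matrix.mul_apply, vecMulVec_apply, dotProduct,
    mulVec, Finset.mul_sum, Finset.sum_mul]
  congr 1; ext j; congr 1; ext l; ring

lemma vmv_mul_vmv {n : Type*} [Fintype n] (a b c d : n → ℂ) :
    vecMulVec a b * vecMulVec c d = (b ⬝ᵥ c) • vecMulVec a d := by
  ext i j
  simp only [Matrix.mul_apply, vecMulVec_apply, Matrix.smul_apply, dotProduct, smul_eq_mul,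
    Finset.sum_mul, Finset.mul_sum]
  congr 1; ext l; ring

lemma vmv_herm {n : Type*} [Fintype n] (v : n → ℂ) :
    (vecMulVec v (star v))ᴴ = vecMulVec v (star v) := by
  ext i j
  simp [vecMulVec_apply, Matrix.conjTranspose_apply, mul_comm]

lemma vnorm_mulVec_le {n m : Type*} [Fintype n] [Fintype m]
    (D : Matrix m n ℂ) (v : n → ℂ) : vnorm (D *ᵥ v) ≤ frobNorm D * vnorm v := by
  have row_bd : ∀ j, ‖(D *ᵥ v) j‖ ≤ vnorm (D j) * vnorm v := by
    intro j
    have h1 : (D *ᵥ v) j = star (star (D j)) ⬝ᵥ v := by simp [mulVec, dotProduct]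
    have h2 := dot_le (star (D j)) v
    have h3 : vnorm (star (D j)) = vnorm (D j) := by simp [vnorm]
    rw [h1]; rw [h3] at h2; exact h2
  have sq_bd : ∑ j, ‖(D *ᵥ v) j‖ ^ 2 ≤ (∑ j, vnorm (D j) ^ 2) * vnorm v ^ 2 := by
    rw [Finset.sum_mul]
    apply Finset.sum_le_sum
    intro j _
    rw [← mul_pow]
    exact pow_le_pow_left₀ (norm_nonneg _) (row_bd j) 2
  have hfr : (∑ j, vnorm (D j) ^ 2) = ∑ j, ∑ l, ‖D j l‖ ^ 2 := by
    apply Finset.sum_congr rfl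
    intro j _
    exact Real.sq_sqrt (by positivity)
  calc vnorm (D *ᵥ v) ≤ Real.sqrt ((∑ j, ∑ l, ‖D j l‖ ^ 2) * vnorm v ^ 2) := by
        rw [vnorm]; apply Real.sqrt_le_sqrt; rw [← hfr]; exact sq_bd
    _ = frobNorm D * vnorm v := by
        rw [Real.sqrt_mul (by positivity),
          Real.sqrt_sq (show (0:ℝ) ≤ vnorm v from Real.sqrt_nonneg _), frobNorm]

set_option maxHeartbeats 1000000 in
/-- `|Δ(A; z) − Δ(S; z)| ≤ h²ε` when `‖A†A − S†S‖_F ≤ ε`, for `h ≤ k` unit vectors. -/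
theorem stmt6 {k n p h : ℕ} (hhk : h ≤ k) (A : Matrix (Fin k) (Fin n) ℂ)
    (S : Matrix (Fin p) (Fin n) ℂ) (ε : ℝ)
    (hAS : frobNorm (Aᴴ * A - Sᴴ * S) ≤ ε)
    (z : Fin h → Fin n → ℂ) (hz : ∀ i, vnorm (z i) = 1) :
    |(frobNorm A ^ 2 -
        frobNorm (A - A * ∑ i, Matrix.vecMulVec (z i) (star (z i))) ^ 2) -
      (frobNorm S ^ 2 -
        frobNorm (S - S * ∑ i, Matrix.vecMulVec (z i) (star (z i))) ^ 2)| ≤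
      (h : ℝ) ^ 2 * ε := by
  have hε0 : 0 ≤ ε := le_trans (Real.sqrt_nonneg _) hAS
  set P : Matrix (Fin n) (Fin n) ℂ := ∑ i, Matrix.vecMulVec (z i) (star (z i)) with hPdef
  set D : Matrix (Fin n) (Fin n) ℂ := Aᴴ * A - Sᴴ * S with hDdef
  set Q : Fin h → Fin h → ℂ := fun i i' => star (z i) ⬝ᵥ (D *ᵥ z i') with hQdef
  set c : Fin h → Fin h → ℂ := fun i j => star (z i) ⬝ᵥ z j with hcdef
  have hPh : Pᴴ = P := by
    rw [hPdef, Matrix.conjTranspose_sum]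
    exact Finset.sum_congr rfl (fun i _ => vmv_herm _)
  -- unit vectors
  have hz1 : ∀ i, ∑ j, ‖z i j‖ ^ 2 = 1 := by
    intro i
    have h1 := hz i
    rw [vnorm] at h1
    have := Real.sq_sqrt (show (0:ℝ) ≤ ∑ j, ‖z i j‖ ^ 2 by positivity)
    rw [h1] at this; linarith [this]
  have hcii : ∀ i, c i i = 1 := by
    intro i
    have e1 : c i i = ((∑ j, ‖z i j‖ ^ 2 : ℝ) : ℂ) := by
      rw [hcdef]
      push_cast
      simp only [dotProduct, Pi.star_apply, Complex.star_def, ← Complex.normSq_eq_conj_mul_self,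
        Complex.normSq_eq_norm_sq]
      push_cast
      rfl
    rw [e1, hz1 i]; norm_num
  -- bounds
  have hQb : ∀ i i', ‖Q i i'‖ ≤ ε := by
    intro i i'
    calc ‖Q i i'‖ ≤ vnorm (z i) * vnorm (D *ᵥ z i') := dot_le _ _
      _ ≤ 1 * (frobNorm D * 1) := by
          rw [hz i]
          refine mul_le_mul_of_nonneg_left ?_ (by norm_num)
          calc vnorm (D *ᵥ z i') ≤ frobNorm D * vnorm (z i') := vnorm_mulVec_le _ _
            _ = frobNorm D * 1 := by rw [hz i']
      _ ≤ ε := by simpa using hAS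
  have hcb : ∀ i i', ‖c i i'‖ ≤ 1 := by
    intro i i'
    calc ‖c i i'‖ ≤ vnorm (z i) * vnorm (z i') := dot_le _ _
      _ = 1 := by rw [hz i, hz i']; norm_num
  -- trace computations
  have tr1 : Matrix.trace (D * P) = ∑ i, Q i i := by
    rw [hPdef, Finset.mul_sum, Matrix.trace_sum]
    exact Finset.sum_congr rfl (fun i _ => trace_mul_vecMulVec D (z i) (star (z i)))
  have tr2 : Matrix.trace (Pᴴ * D) = ∑ i, Q i i := by
    rw [hPh, Matrix.trace_mul_comm, tr1]
  have tr3 : Matrix.trace (Pᴴ * (D * P)) = ∑ i, ∑ i', c i' i * Q i i' := by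
    rw [hPh]
    conv_lhs => rw [hPdef, Finset.sum_mul, Matrix.trace_sum]
    refine Finset.sum_congr rfl (fun i _ => ?_)
    rw [Finset.mul_sum, Finset.mul_sum, Matrix.trace_sum]
    refine Finset.sum_congr rfl (fun i' _ => ?_)
    rw [Matrix.trace_mul_comm, Matrix.mul_assoc, vmv_mul_vmv, Matrix.mul_smul,
      Matrix.trace_smul, trace_mul_vecMulVec]
    simp [hcdef, hQdef, smul_eq_mul]
  -- assemble
  have key : (frobNorm A ^ 2 -
        frobNorm (A - A * P) ^ 2) -
      (frobNorm S ^ 2 -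
        frobNorm (S - S * P) ^ 2) =
      ((∑ i, Q i i) - ∑ i, ∑ i' ∈ Finset.univ.erase i, c i' i * Q i i').re := by
    rw [delta_eq A P, delta_eq S P, ← Complex.sub_re]
    congr 1
    have eA : (Matrix.trace ((Aᴴ * A) * P) + Matrix.trace (Pᴴ * (Aᴴ * A))
          - Matrix.trace (Pᴴ * ((Aᴴ * A) * P)))
        - (Matrix.trace ((Sᴴ * S) * P) + Matrix.trace (Pᴴ * (Sᴴ * S))
          - Matrix.trace (Pᴴ * ((Sᴴ * S) * P)))
        = Matrix.trace (D * P) + Matrix.trace (Pᴴ * D) - Matrix.trace (Pᴴ * (D * P)) := by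
      rw [hDdef]
      simp only [Matrix.sub_mul, Matrix.mul_sub, Matrix.trace_sub]
      ring
    rw [eA, tr1, tr2, tr3]
    have split : ∀ i, ∑ i', c i' i * Q i i'
        = (∑ i' ∈ Finset.univ.erase i, c i' i * Q i i') + Q i i := by
      intro i
      rw [← Finset.sum_erase_add Finset.univ _ (Finset.mem_univ i), hcii i, one_mul]
    rw [Finset.sum_congr rfl (fun i _ => split i), Finset.sum_add_distrib]
    ring
  rw [key]
  -- final bound
  have b1 : ‖∑ i, Q i i‖ ≤ (h : ℝ) * ε := by
    calc ‖∑ i, Q i i‖ ≤ ∑ i, ‖Q i i‖ := norm_sum_le _ _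
      _ ≤ ∑ _i : Fin h, ε := Finset.sum_le_sum (fun i _ => hQb i i)
      _ = (h : ℝ) * ε := by
          rw [Finset.sum_const, Finset.card_univ, Fintype.card_fin, nsmul_eq_mul]
  have b2 : ‖∑ i, ∑ i' ∈ Finset.univ.erase i, c i' i * Q i i'‖
      ≤ (h : ℝ) * (((h - 1 : ℕ)) : ℝ) * ε := by
    calc ‖∑ i, ∑ i' ∈ Finset.univ.erase i, c i' i * Q i i'‖
        ≤ ∑ i, ‖∑ i' ∈ Finset.univ.erase i, c i' i * Q i i'‖ := norm_sum_le _ _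
      _ ≤ ∑ _i : Fin h, (((h - 1 : ℕ)) : ℝ) * ε := by
          apply Finset.sum_le_sum
          intro i _
          calc ‖∑ i' ∈ Finset.univ.erase i, c i' i * Q i i'‖
              ≤ ∑ i' ∈ Finset.univ.erase i, ‖c i' i * Q i i'‖ := norm_sum_le _ _
            _ ≤ ∑ _i' ∈ Finset.univ.erase i, ε := by
                apply Finset.sum_le_sum
                intro i' _
                rw [norm_mul]
                calc ‖c i' i‖ * ‖Q i i'‖ ≤ 1 * ε :=
                      mul_le_mul (hcb i' i) (hQb i i') (norm_nonneg _) (by norm_num)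
                  _ = ε := one_mul ε
            _ = (((h - 1 : ℕ)) : ℝ) * ε := by
                rw [Finset.sum_const, Finset.card_erase_of_mem (Finset.mem_univ i),
                  Finset.card_univ, Fintype.card_fin, nsmul_eq_mul]
      _ = (h : ℝ) * (((h - 1 : ℕ)) : ℝ) * ε := by
          rw [Finset.sum_const, Finset.card_univ, Fintype.card_fin, nsmul_eq_mul]; ring
  have habs : |((∑ i, Q i i) - ∑ i, ∑ i' ∈ Finset.univ.erase i, c i' i * Q i i').re|
      ≤ (h : ℝ) * ε + (h : ℝ) * (((h - 1 : ℕ)) : ℝ) * ε := by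
    calc |((∑ i, Q i i) - ∑ i, ∑ i' ∈ Finset.univ.erase i, c i' i * Q i i').re|
        ≤ ‖(∑ i, Q i i) - ∑ i, ∑ i' ∈ Finset.univ.erase i, c i' i * Q i i'‖ :=
          Complex.abs_re_le_norm _
      _ ≤ ‖∑ i, Q i i‖ + ‖∑ i, ∑ i' ∈ Finset.univ.erase i, c i' i * Q i i'‖ := norm_sub_le _ _
      _ ≤ (h : ℝ) * ε + (h : ℝ) * (((h - 1 : ℕ)) : ℝ) * ε := add_le_add b1 b2
  refine le_trans habs ?_
  have hnat : (h * (1 + (h - 1)) : ℕ) ≤ h * h := by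
    cases h with
    | zero => simp
    | succ m => exact Nat.mul_le_mul (le_refl _) (by omega)
  have hreal : (h : ℝ) * (1 + (((h - 1 : ℕ)) : ℝ)) ≤ (h : ℝ) * (h : ℝ) := by
    have := (Nat.cast_le (α := ℝ)).mpr hnat
    push_cast at this
    linarith
  nlinarith [mul_le_mul_of_nonneg_right hreal hε0]
end
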